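/- Let E be a real inner product space, let u₁ and u₂ be unit vectors with ⟪u₁, u₂⟫ = cos θ for some θ with 0 < θ ≤ π/3, let d > 0, and set a = d•u₁ and c = d•u₂. Then d/2 < d/(2·cos(θ/2)), and for every r with d/2 ≤ r < d/(2·cos(θ/2)) the three pairwise intersections closedBall(0, r) ∩ closedBall(a, r), closedBall(0, r) ∩ closedBall(c, r), and closedBall(a, r) ∩ closedBall(c, r) are all nonempty, while the triple intersection closedBall(0, r) ∩ closedBall(a, r) ∩ closedBall(c, r) is empty. -/

import Mathlib

open scoped RealInnerProductSpace

set_option maxHeartbeats 1000000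

/-- Let `u₁, u₂` be unit vectors in a real inner product space with
`⟪u₁, u₂⟫ = cos θ` for some `0 < θ ≤ π/3`, let `d > 0`, and set `a = d • u₁`,
`c = d • u₂`. Then `d/2 < d / (2 · cos (θ/2))`, and for every radius `r` with
`d/2 ≤ r < d / (2 · cos (θ/2))` the three pairwise intersections of the closed
`r`-balls centered at `0`, `a`, `c` are nonempty while their triple
intersection is empty. -/
theorem pairwise_inter_nonempty_triple_inter_empty
    {E : Type*} [NormedAddCommGroup E] [InnerProductSpace ℝ E]
    (u₁ u₂ : E) (hu₁ : ‖u₁‖ = 1) (hu₂ : ‖u₂‖ = 1)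
    (θ : ℝ) (hθ₀ : 0 < θ) (hθ₁ : θ ≤ Real.pi / 3)
    (hangle : ⟪u₁, u₂⟫ = Real.cos θ)
    (d : ℝ) (hd : 0 < d)
    (a c : E) (ha : a = d • u₁) (hc : c = d • u₂) :
    d / 2 < d / (2 * Real.cos (θ / 2)) ∧
    ∀ r : ℝ, d / 2 ≤ r → r < d / (2 * Real.cos (θ / 2)) →
      (Metric.closedBall (0 : E) r ∩ Metric.closedBall a r).Nonempty ∧
      (Metric.closedBall (0 : E) r ∩ Metric.closedBall c r).Nonempty ∧
      (Metric.closedBall a r ∩ Metric.closedBall c r).Nonempty ∧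
      (Metric.closedBall (0 : E) r ∩ Metric.closedBall a r ∩
        Metric.closedBall c r) = ∅ := by
  have hπ := Real.pi_pos
  set cθ := Real.cos θ with hcθdef
  set cc := Real.cos (θ / 2) with hccdef
  -- basic trig facts
  have hcθ_half : (1 : ℝ) / 2 ≤ cθ := by
    have h := Real.cos_le_cos_of_nonneg_of_le_pi hθ₀.le (by linarith) hθ₁
    rwa [Real.cos_pi_div_three] at h
  have hcc_pos : 0 < cc := by
    apply Real.cos_pos_of_mem_Ioo
    constructor <;> [linarith; linarith]
  have hcc_lt1 : cc < 1 := by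
    have h := Real.cos_lt_cos_of_nonneg_of_le_pi (le_refl (0:ℝ)) (by linarith) (by linarith : (0:ℝ) < θ / 2)
    rwa [Real.cos_zero] at h
  have hccsq : 2 * cc ^ 2 = 1 + cθ := by
    have h := Real.cos_sq (θ / 2)
    rw [show 2 * (θ / 2) = θ by ring] at h
    rw [hccdef, h]; ring
  have hR : d / 2 < d / (2 * cc) :=
    div_lt_div_of_pos_left hd (by linarith) (by linarith)
  refine ⟨hR, fun r hr₁ hr₂ => ?_⟩
  have hr0 : 0 < r := lt_of_lt_of_le (by positivity) hr₁
  have hnorm_a : ‖a‖ = d := by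
    rw [ha, norm_smul, hu₁, Real.norm_eq_abs, abs_of_pos hd, mul_one]
  have hnorm_c : ‖c‖ = d := by
    rw [hc, norm_smul, hu₂, Real.norm_eq_abs, abs_of_pos hd, mul_one]
  have hnorm_ca : ‖c - a‖ ≤ d := by
    have hangle' : ⟪u₂, u₁⟫ = cθ := by rw [real_inner_comm]; exact hangle
    have hsq : ‖c - a‖ ^ 2 = d ^ 2 * (2 - 2 * cθ) := by
      rw [norm_sub_sq_real, hc, ha, real_inner_smul_left, real_inner_smul_right,
        hangle', norm_smul, norm_smul, hu₁, hu₂, Real.norm_eq_abs, abs_of_pos hd]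
      ring
    nlinarith [norm_nonneg (c - a), sq_nonneg (‖c - a‖ - d), sq_nonneg d]
  -- witnesses for pairwise intersections
  have hmem : ∀ y z : E, ‖y - z‖ ≤ d →
      ((1:ℝ)/2) • (y + z) ∈ Metric.closedBall y r ∩ Metric.closedBall z r := by
    intro y z hyz
    have h1 : ((1:ℝ)/2) • (y + z) - y = ((1:ℝ)/2) • (z - y) := by module
    have h2 : ((1:ℝ)/2) • (y + z) - z = ((1:ℝ)/2) • (y - z) := by module
    have hn : ‖y - z‖ = ‖z - y‖ := by rw [norm_sub_rev]
    constructor <;>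
      simp only [Metric.mem_closedBall, dist_eq_norm, h1, h2, norm_smul,
        Real.norm_eq_abs] <;> rw [abs_of_pos (by norm_num : (0:ℝ) < 1/2)]
    · rw [← hn]; nlinarith
    · nlinarith
  have h0a : ‖(0 : E) - a‖ ≤ d := by simp [hnorm_a]
  have h0c : ‖(0 : E) - c‖ ≤ d := by simp [hnorm_c]
  have hac : ‖a - c‖ ≤ d := by rwa [norm_sub_rev]
  refine ⟨⟨_, hmem 0 a h0a⟩, ⟨_, hmem 0 c h0c⟩, ⟨_, hmem a c hac⟩, ?_⟩
  -- triple intersection is empty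
  rw [Set.eq_empty_iff_forall_notMem]
  rintro x ⟨⟨hx0, hxa⟩, hxc⟩
  simp only [Metric.mem_closedBall, dist_eq_norm, sub_zero] at hx0 hxa hxc
  set s2 := ‖x‖ ^ 2 with hs2def
  set p := ⟪x, u₁⟫ with hpdef
  set q := ⟪x, u₂⟫ with hqdef
  have hs : s2 ≤ r ^ 2 := by
    have := pow_le_pow_left₀ (norm_nonneg x) hx0 2
    simpa [hs2def] using this
  have hA : s2 - 2 * d * p + d ^ 2 ≤ r ^ 2 := by
    have h : ‖x - a‖ ^ 2 = s2 - 2 * d * p + d ^ 2 := by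
      rw [norm_sub_sq_real, ha, real_inner_smul_right, norm_smul, hu₁,
        Real.norm_eq_abs, abs_of_pos hd]
      ring
    have h2 := pow_le_pow_left₀ (norm_nonneg (x - a)) hxa 2
    linarith
  have hC : s2 - 2 * d * q + d ^ 2 ≤ r ^ 2 := by
    have h : ‖x - c‖ ^ 2 = s2 - 2 * d * q + d ^ 2 := by
      rw [norm_sub_sq_real, hc, real_inner_smul_right, norm_smul, hu₂,
        Real.norm_eq_abs, abs_of_pos hd]
      ring
    have h2 := pow_le_pow_left₀ (norm_nonneg (x - c)) hxc 2
    linarith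
  -- circumcenter
  set t := d / (2 * (1 + cθ)) with htdef
  have h1cθ : 0 < 1 + cθ := by linarith
  have ht : 2 * t * (1 + cθ) = d := by
    rw [htdef]; field_simp
  have htpos : 0 < t := by rw [htdef]; positivity
  have hB : 0 ≤ s2 - 2 * (t * (p + q)) + t ^ 2 * (2 + 2 * cθ) := by
    have hinner : ⟪x, t • (u₁ + u₂)⟫ = t * (p + q) := by
      rw [real_inner_smul_right, inner_add_right]
    have hnormo : ‖t • (u₁ + u₂)‖ ^ 2 = t ^ 2 * (2 + 2 * cθ) := by
      rw [norm_smul, mul_pow, Real.norm_eq_abs, sq_abs, ← real_inner_self_eq_norm_sq,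
        real_inner_add_add_self, hangle, real_inner_self_eq_norm_sq,
        real_inner_self_eq_norm_sq, hu₁, hu₂]
      ring
    have h := norm_sub_sq_real x (t • (u₁ + u₂))
    rw [hinner, hnormo] at h
    have h2 := sq_nonneg ‖x - t • (u₁ + u₂)‖
    linarith
  -- combine
  have key1 : 2 * s2 + 2 * d ^ 2 - 2 * r ^ 2 ≤ 2 * d * (p + q) := by linarith
  have key2 : 2 * (t * (p + q)) ≤ s2 + t * d := by
    have h : t ^ 2 * (2 + 2 * cθ) = t * d := by rw [← ht]; ring
    linarith
  have key3 : t * (2 * s2 + 2 * d ^ 2 - 2 * r ^ 2) ≤ d * (s2 + t * d) :=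
    calc t * (2 * s2 + 2 * d ^ 2 - 2 * r ^ 2) ≤ t * (2 * d * (p + q)) :=
          mul_le_mul_of_nonneg_left key1 htpos.le
      _ = d * (2 * (t * (p + q))) := by ring
      _ ≤ d * (s2 + t * d) := mul_le_mul_of_nonneg_left key2 hd.le
  have hds2 : d * s2 = 2 * t * (1 + cθ) * s2 := by rw [ht]
  have key4 : t * (d ^ 2 - 2 * r ^ 2 - 2 * cθ * s2) ≤ t * 0 := by
    have h := key3
    nlinarith [hds2]
  have key5 : d ^ 2 - 2 * r ^ 2 - 2 * cθ * s2 ≤ 0 := le_of_mul_le_mul_left key4 htpos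
  have hdr : 2 * cc * r < d := by
    rw [lt_div_iff₀ (by linarith : (0:ℝ) < 2 * cc)] at hr₂
    linarith
  have hsq : (2 * cc * r) * (2 * cc * r) < d * d :=
    mul_self_lt_mul_self (by positivity) hdr
  have h6 : 2 * cθ * s2 ≤ 2 * cθ * r ^ 2 :=
    mul_le_mul_of_nonneg_left hs (by linarith : (0:ℝ) ≤ 2 * cθ)
  have heq : 2 * r ^ 2 + 2 * cθ * r ^ 2 = (2 * cc * r) * (2 * cc * r) := by
    linear_combination (-2 * r ^ 2) * hccsq
  linarith [key5, h6, heq, hsq]
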